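/- Let n ≥ 2 and ζ = exp(2πi/n). The polynomial f(x) = (1/(2n))·((1-n)x + (1+n))·(x^n-1)/(x-1) over ℂ satisfies f(1)=1, f'(1)=0, and f(ζ^l)=0 for all l ∈ {1,...,n-1}. -/

import Mathlib

open Polynomial

theorem stmt1 (n : ℕ) (hn : 2 ≤ n) (ζ : ℂ)
    (hζ : ζ = Complex.exp (2 * Real.pi * Complex.I / n))
    (f : Polynomial ℂ)
    (hf : f = C (1 / (2 * (n : ℂ))) * (C ((1 : ℂ) - n) * X + C ((1 : ℂ) + n)) *
      ∑ i ∈ Finset.range n, X ^ i) :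
    f.eval 1 = 1 ∧ (Polynomial.derivative f).eval 1 = 0 ∧
      ∀ l, 1 ≤ l → l ≤ n - 1 → f.eval (ζ ^ l) = 0 := by
  have hn0 : (n : ℂ) ≠ 0 := Nat.cast_ne_zero.mpr (by omega)
  have hsum1 : (∑ i ∈ Finset.range n, (X : ℂ[X]) ^ i).eval 1 = n := by
    simp [eval_finset_sum]
  have hdsum1 : (derivative (∑ i ∈ Finset.range n, (X : ℂ[X]) ^ i)).eval 1
      = (n : ℂ) * (n - 1) / 2 := by
    rw [derivative_sum]
    simp only [derivative_X_pow, eval_finset_sum, eval_mul, eval_natCast, eval_pow, eval_X,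
      one_pow, mul_one, eval_C]
    have h2 : ((∑ i ∈ Finset.range n, i : ℕ) : ℂ) * 2 = (n : ℂ) * ((n : ℂ) - 1) := by
      have := Finset.sum_range_id_mul_two n
      have h3 : ((∑ i ∈ Finset.range n, i) * 2 : ℕ) = (n * (n - 1) : ℕ) := this
      calc ((∑ i ∈ Finset.range n, i : ℕ) : ℂ) * 2
          = (((∑ i ∈ Finset.range n, i) * 2 : ℕ) : ℂ) := by push_cast; ring
        _ = ((n * (n - 1) : ℕ) : ℂ) := by rw [h3]
        _ = (n : ℂ) * ((n : ℂ) - 1) := by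
            push_cast [Nat.cast_sub (by omega : 1 ≤ n)]; ring
    push_cast at h2 ⊢
    field_simp
    linear_combination h2
  refine ⟨?_, ?_, ?_⟩
  · rw [hf]
    simp only [eval_mul, eval_add, eval_C, eval_X, mul_one, hsum1]
    field_simp
    norm_num
  · rw [hf]
    simp only [derivative_mul, derivative_C, zero_mul, zero_add, derivative_add,
      derivative_C_mul, derivative_X, mul_one, eval_add, eval_mul, eval_C, eval_X, hsum1, hdsum1,
      eval_zero]
    field_simp
    ring
  · intro l hl1 hl2
    have hprim : IsPrimitiveRoot ζ n := hζ ▸ Complex.isPrimitiveRoot_exp n (by omega)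
    have h1 : ζ ^ l ≠ 1 := hprim.pow_ne_one_of_pos_of_lt (by omega) (by omega)
    have h2 : (ζ ^ l) ^ n = 1 := by
      rw [← pow_mul, mul_comm, pow_mul, hprim.pow_eq_one, one_pow]
    have hs : ∑ i ∈ Finset.range n, (ζ ^ l) ^ i = 0 := by
      rw [geom_sum_eq h1 n, h2, sub_self, zero_div]
    rw [hf]
    simp [eval_finset_sum, hs]
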